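/- Let a < b be real numbers and let f : ℝ × ℝ → ℂ be continuous on [a,b] × [a,b]. Define G(x, y) := ∑_{n=1}^∞ f^{∗n}(x, y), the sum of the iterated Volterra powers. Then G solves the linear Volterra integral equation of the second kind with kernel f: for all x, y ∈ [a,b] with y ≤ x, G(x, y) = f(x, y) + ∫_y^x f(x, ζ)·G(ζ, y) dζ. -/

import Mathlib

open MeasureTheory Set intervalIntegral

noncomputable def volterraComp (f l : ℝ × ℝ → ℂ) : ℝ × ℝ → ℂ :=
  fun p => ∫ ζ in p.2..p.1, f (p.1, ζ) * l (ζ, p.2)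

/-- `volterraPow f n` is the iterated Volterra power `f^{∗(n+1)}`,
so that `volterraPow f 0 = f^{∗1} = f`. -/
noncomputable def volterraPow (f : ℝ × ℝ → ℂ) : ℕ → ℝ × ℝ → ℂ
  | 0 => f
  | n + 1 => volterraComp f (volterraPow f n)

lemma volterraPow_continuous {F : ℝ × ℝ → ℂ} (hF : Continuous F) (n : ℕ) :
    Continuous (volterraPow F n) := by
  induction n with
  | zero => exact hF
  | succ n ih =>
    have hg : Continuous (Function.uncurry fun (p : ℝ × ℝ) (ζ : ℝ) =>
        F (p.1, ζ) * volterraPow F n (ζ, p.2)) := by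
      apply Continuous.mul
      · exact hF.comp (by fun_prop)
      · exact ih.comp (by fun_prop)
    have h1 : Continuous fun p : ℝ × ℝ =>
        ∫ ζ in (0:ℝ)..p.1, F (p.1, ζ) * volterraPow F n (ζ, p.2) :=
      continuous_parametric_intervalIntegral_of_continuous hg continuous_fst
    have h2 : Continuous fun p : ℝ × ℝ =>
        ∫ ζ in (0:ℝ)..p.2, F (p.1, ζ) * volterraPow F n (ζ, p.2) :=
      continuous_parametric_intervalIntegral_of_continuous hg continuous_snd
    have key : volterraPow F (n+1) = fun p : ℝ × ℝ =>
        (∫ ζ in (0:ℝ)..p.1, F (p.1, ζ) * volterraPow F n (ζ, p.2)) -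
        ∫ ζ in (0:ℝ)..p.2, F (p.1, ζ) * volterraPow F n (ζ, p.2) := by
      funext p
      have hi : ∀ u v : ℝ,
          IntervalIntegrable (fun ζ => F (p.1, ζ) * volterraPow F n (ζ, p.2)) volume u v := by
        intro u v
        apply Continuous.intervalIntegrable
        exact (hF.comp (by fun_prop)).mul (ih.comp (by fun_prop))
      show volterraComp F (volterraPow F n) p = _
      rw [volterraComp]
      rw [intervalIntegral.integral_interval_sub_left (hi 0 p.1) (hi 0 p.2)]
    rw [key]; exact h1.sub h2

lemma volterraPow_norm_le {F : ℝ × ℝ → ℂ} (hF : Continuous F) {M : ℝ}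
    (hM : ∀ p, ‖F p‖ ≤ M) (n : ℕ) :
    ∀ x y : ℝ, y ≤ x →
      ‖volterraPow F n (x, y)‖ ≤ M ^ (n + 1) * (x - y) ^ n / n.factorial := by
  have hM0 : 0 ≤ M := (norm_nonneg (F (0, 0))).trans (hM _)
  induction n with
  | zero => intro x y _; simpa [volterraPow] using hM (x, y)
  | succ n ih =>
    intro x y hyx
    have hcont : Continuous fun ζ => F (x, ζ) * volterraPow F n (ζ, y) :=
      (hF.comp (by fun_prop)).mul ((volterraPow_continuous hF n).comp (by fun_prop))
    have step1 : ‖volterraPow F (n + 1) (x, y)‖ ≤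
        ∫ ζ in y..x, ‖F (x, ζ) * volterraPow F n (ζ, y)‖ := by
      show ‖∫ ζ in y..x, F (x, ζ) * volterraPow F n (ζ, y)‖ ≤ _
      exact intervalIntegral.norm_integral_le_integral_norm hyx
    have step2 : (∫ ζ in y..x, ‖F (x, ζ) * volterraPow F n (ζ, y)‖) ≤
        ∫ ζ in y..x, M * M ^ (n + 1) / n.factorial * (ζ - y) ^ n := by
      apply intervalIntegral.integral_mono_on hyx
      · exact hcont.norm.intervalIntegrable _ _
      · apply Continuous.intervalIntegrable; fun_prop
      · intro ζ hζ
        rw [norm_mul]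
        calc ‖F (x, ζ)‖ * ‖volterraPow F n (ζ, y)‖
            ≤ M * (M ^ (n + 1) * (ζ - y) ^ n / n.factorial) := by
              apply mul_le_mul (hM _) (ih ζ y hζ.1) (norm_nonneg _) hM0
          _ = M * M ^ (n + 1) / n.factorial * (ζ - y) ^ n := by ring
    have step3 : (∫ ζ in y..x, M * M ^ (n + 1) / n.factorial * (ζ - y) ^ n) =
        M ^ (n + 2) * (x - y) ^ (n + 1) / (n + 1).factorial := by
      rw [intervalIntegral.integral_const_mul]
      rw [show (fun ζ : ℝ => (ζ - y) ^ n) = fun ζ : ℝ => (fun t : ℝ => t ^ n) (ζ - y) from rfl]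
      rw [intervalIntegral.integral_comp_sub_right (fun t : ℝ => t ^ n) y]
      rw [sub_self, integral_pow]
      have h1 : (n.factorial : ℝ) ≠ 0 := by positivity
      have h2 : (n : ℝ) + 1 ≠ 0 := by positivity
      rw [Nat.factorial_succ]
      push_cast
      field_simp
      ring
    calc ‖volterraPow F (n + 1) (x, y)‖ ≤ _ := step1
      _ ≤ _ := step2
      _ = M ^ (n + 2) * (x - y) ^ (n + 1) / (n + 1).factorial := step3
      _ = M ^ (n + 1 + 1) * (x - y) ^ (n + 1) / (n + 1).factorial := by norm_num

lemma volterraSummableBound {M r : ℝ} :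
    Summable fun n : ℕ => M ^ (n + 1) * r ^ n / n.factorial := by
  have : ∀ n : ℕ, M ^ (n + 1) * r ^ n / n.factorial = M * ((M * r) ^ n / n.factorial) := by
    intro n; rw [mul_pow, pow_succ]; ring
  exact Summable.congr ((Real.summable_pow_div_factorial (M * r)).mul_left M)
    fun n => (this n).symm

/-- The sum of the iterated Volterra powers solves the linear Volterra integral
equation of the second kind with kernel `f`. -/
theorem volterraNeumann_solves_integral_equation (a b : ℝ) (hab : a < b) (f : ℝ × ℝ → ℂ)
    (hf : ContinuousOn f (Set.Icc a b ×ˢ Set.Icc a b))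
    (G : ℝ × ℝ → ℂ) (hG : G = fun p => ∑' n : ℕ, volterraPow f n p) :
    ∀ x ∈ Set.Icc a b, ∀ y ∈ Set.Icc a b, y ≤ x →
      G (x, y) = f (x, y) + ∫ ζ in y..x, f (x, ζ) * G (ζ, y) := by
  -- clamp to [a,b]
  set c : ℝ → ℝ := fun t => max a (min b t) with hc_def
  have hc : Continuous c := by fun_prop
  have hc_mem : ∀ t, c t ∈ Set.Icc a b :=
    fun t => ⟨le_max_left _ _, max_le hab.le (min_le_left _ _)⟩
  have hc_eq : ∀ t ∈ Set.Icc a b, c t = t := by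
    intro t ht
    simp only [hc_def]
    rw [min_eq_right ht.2, max_eq_right ht.1]
  set F : ℝ × ℝ → ℂ := fun p => f (c p.1, c p.2) with hF_def
  have hFc : Continuous F := by
    apply hf.comp_continuous (by fun_prop)
    intro p; exact Set.mk_mem_prod (hc_mem _) (hc_mem _)
  have hFf : ∀ p ∈ Set.Icc a b ×ˢ Set.Icc a b, F p = f p := by
    rintro ⟨u, v⟩ ⟨hu, hv⟩
    simp only [hF_def, hc_eq u hu, hc_eq v hv]
  -- a uniform bound
  obtain ⟨M, hM'⟩ := (isCompact_Icc.prod isCompact_Icc).exists_bound_of_continuousOn hf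
  have hM : ∀ p, ‖F p‖ ≤ M := fun p => hM' _ (Set.mk_mem_prod (hc_mem _) (hc_mem _))
  have hM0 : 0 ≤ M := (norm_nonneg (F (a, a))).trans (hM _)
  -- the powers of f and F agree on the square
  have hpow_eq : ∀ n : ℕ, ∀ p ∈ Set.Icc a b ×ˢ Set.Icc a b,
      volterraPow f n p = volterraPow F n p := by
    intro n
    induction n with
    | zero => intro p hp; exact (hFf p hp).symm
    | succ n ih =>
      rintro ⟨u, v⟩ ⟨hu, hv⟩
      show volterraComp f (volterraPow f n) (u, v) = volterraComp F (volterraPow F n) (u, v)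
      rw [volterraComp, volterraComp]
      apply intervalIntegral.integral_congr
      intro ζ hζ
      have hζ' : ζ ∈ Set.Icc a b := Set.uIcc_subset_Icc hv hu hζ
      show f ((u, v).1, ζ) * volterraPow f n (ζ, (u, v).2) =
        F ((u, v).1, ζ) * volterraPow F n (ζ, (u, v).2)
      rw [hFf (u, ζ) ⟨hu, hζ'⟩, ih (ζ, v) ⟨hζ', hv⟩]
  -- pointwise summability on the triangle
  have hsummable : ∀ z w : ℝ, w ≤ z → Summable fun n => volterraPow F n (z, w) := by
    intro z w hwz
    apply Summable.of_norm_bounded volterraSummableBound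
    exact fun n => volterraPow_norm_le hFc hM n z w hwz
  have hGsum : ∀ p ∈ Set.Icc a b ×ˢ Set.Icc a b, G p = ∑' n : ℕ, volterraPow F n p := by
    intro p hp
    rw [hG]
    exact tsum_congr fun n => hpow_eq n p hp
  intro x hx y hy hyx
  have hIocIcc : Set.Ioc y x ⊆ Set.Icc a b :=
    fun ζ hζ => ⟨hy.1.trans hζ.1.le, hζ.2.trans hx.2⟩
  -- the integrands
  set g : ℕ → ℝ → ℂ := fun n ζ => F (x, ζ) * volterraPow F n (ζ, y) with hg_def
  have hg_cont : ∀ n, Continuous (g n) := fun n =>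
    (hFc.comp (by fun_prop)).mul ((volterraPow_continuous hFc n).comp (by fun_prop))
  have hg_int : ∀ n, Integrable (g n) (volume.restrict (Set.Ioc y x)) :=
    fun n => (hg_cont n).integrableOn_Ioc
  -- bound on the norm integrals
  have hg_norm : ∀ n, (∫ ζ in Set.Ioc y x, ‖g n ζ‖) ≤
      (x - y) * (M * (M ^ (n + 1) * (x - y) ^ n / n.factorial)) := by
    intro n
    have hbd : ∀ ζ ∈ Set.Ioc y x, ‖g n ζ‖ ≤ M * (M ^ (n + 1) * (x - y) ^ n / n.factorial) := by
      intro ζ hζ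
      rw [hg_def, norm_mul]
      apply mul_le_mul (hM _) _ (norm_nonneg _) hM0
      calc ‖volterraPow F n (ζ, y)‖ ≤ M ^ (n + 1) * (ζ - y) ^ n / n.factorial :=
            volterraPow_norm_le hFc hM n ζ y hζ.1.le
        _ ≤ M ^ (n + 1) * (x - y) ^ n / n.factorial := by
            have h1 : (ζ - y) ^ n ≤ (x - y) ^ n :=
              pow_le_pow_left₀ (by linarith [hζ.1]) (by linarith [hζ.2]) n
            gcongr
    calc (∫ ζ in Set.Ioc y x, ‖g n ζ‖) ≤
        ∫ _ζ in Set.Ioc y x, M * (M ^ (n + 1) * (x - y) ^ n / n.factorial) := by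
          apply setIntegral_mono_on (hg_int n).norm (integrable_const _) measurableSet_Ioc hbd
      _ = (volume (Set.Ioc y x)).toReal * (M * (M ^ (n + 1) * (x - y) ^ n / n.factorial)) := by
          rw [setIntegral_const, smul_eq_mul]
          rfl
      _ = (x - y) * (M * (M ^ (n + 1) * (x - y) ^ n / n.factorial)) := by
          rw [Real.volume_Ioc, ENNReal.toReal_ofReal (by linarith)]
  have hg_sum : Summable fun n => ∫ ζ in Set.Ioc y x, ‖g n ζ‖ := by
    apply Summable.of_nonneg_of_le
      (fun n => integral_nonneg fun ζ => norm_nonneg _) hg_norm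
    apply Summable.mul_left
    exact Summable.mul_left M volterraSummableBound
  -- the main computation
  have key : (∑' n : ℕ, ∫ ζ in Set.Ioc y x, g n ζ) = ∫ ζ in Set.Ioc y x, ∑' n : ℕ, g n ζ :=
    integral_tsum_of_summable_integral_norm hg_int hg_sum
  calc G (x, y) = ∑' n : ℕ, volterraPow F n (x, y) :=
        hGsum (x, y) ⟨hx, hy⟩
    _ = volterraPow F 0 (x, y) + ∑' n : ℕ, volterraPow F (n + 1) (x, y) :=
        Summable.tsum_eq_zero_add (hsummable x y hyx)
    _ = F (x, y) + ∑' n : ℕ, ∫ ζ in Set.Ioc y x, g n ζ := by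
        congr 1
        apply tsum_congr
        intro n
        show volterraComp F (volterraPow F n) (x, y) = _
        rw [volterraComp, intervalIntegral.integral_of_le hyx]
    _ = F (x, y) + ∫ ζ in Set.Ioc y x, ∑' n : ℕ, g n ζ := by rw [key]
    _ = f (x, y) + ∫ ζ in y..x, f (x, ζ) * G (ζ, y) := by
        rw [hFf (x, y) ⟨hx, hy⟩]
        congr 1
        rw [intervalIntegral.integral_of_le hyx]
        apply setIntegral_congr_fun measurableSet_Ioc
        intro ζ hζ
        have hζab : ζ ∈ Set.Icc a b := hIocIcc hζ
        rw [hg_def]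
        simp only
        rw [tsum_mul_left, ← hGsum (ζ, y) ⟨hζab, hy⟩, hFf (x, ζ) ⟨hx, hζab⟩]
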